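/- The asymptotic growth constant of the spanning trees of the sequence {B_n} of Schreier graphs of the Basilica group equals (2/3)·log 2; that is, lim_{n→∞} (log τ(B_n)) / |V(B_n)| = (2/3)·log 2, where |V(B_n)| = 2^n and τ(B_n) is the number of spanning trees of B_n. -/

import Mathlib

/-- A finite multigraph on a vertex set `V`: a finite edge type together with an
incidence map assigning to each edge its unordered pair of endpoints
(loops and parallel edges are allowed). -/
structure Multigraph (V : Type) where
  /-- the type of edges -/
  Edge : Type
  /-- the edge type is finite -/
  fintypeEdge : Fintype Edge
  /-- equality of edges is decidable -/
  decEqEdge : DecidableEq Edge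
  /-- the unordered pair of endpoints of an edge -/
  inc : Edge → Sym2 V

attribute [instance] Multigraph.fintypeEdge Multigraph.decEqEdge

namespace Multigraph

variable {V : Type} [Fintype V] [DecidableEq V]

/-- The simple graph underlying the spanning subgraph of `G` with edge set `A`:
two distinct vertices are adjacent iff some edge in `A` has them as endpoints. -/
def toSimple (G : Multigraph V) (A : Finset G.Edge) : SimpleGraph V :=
  SimpleGraph.fromRel fun u v => ∃ e ∈ A, G.inc e = s(u, v)

/-- `G.comps A` is the number `k(A)` of connected components of the spanning
subgraph of `G` with edge set `A`. -/
noncomputable def comps (G : Multigraph V) (A : Finset G.Edge) : ℕ :=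
  Nat.card (G.toSimple A).ConnectedComponent

/-- The rank `r(A) = |V| - k(A)` of the spanning subgraph with edge set `A`. -/
noncomputable def rk (G : Multigraph V) (A : Finset G.Edge) : ℕ :=
  Fintype.card V - G.comps A

/-- The nullity `n(A) = |E(A)| - r(A)` of the spanning subgraph with edge set `A`. -/
noncomputable def nullity (G : Multigraph V) (A : Finset G.Edge) : ℕ :=
  A.card - G.rk A

/-- The Tutte polynomial
`T(G; x, y) = ∑_{A ⊆ E} (x - 1) ^ (r(E) - r(A)) * (y - 1) ^ n(A)`,
as a function of two real variables. -/
noncomputable def tutte (G : Multigraph V) (x y : ℝ) : ℝ :=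
  ∑ A ∈ (Finset.univ : Finset G.Edge).powerset,
    (x - 1) ^ (G.rk Finset.univ - G.rk A) * (y - 1) ^ (G.nullity A)

/-- The reliability polynomial `R(G, p)`: the probability that, when each edge is
independently active with probability `p`, every pair of vertices is joined by a
path of active edges (i.e. the spanning subgraph of active edges is connected). -/
noncomputable def reliability (G : Multigraph V) (p : ℝ) : ℝ :=
  ∑ A ∈ (Finset.univ : Finset G.Edge).powerset,
    if G.comps A = 1 then p ^ A.card * (1 - p) ^ (Fintype.card G.Edge - A.card) else 0

/-- The complexity `τ(G)`: the number of spanning subtrees of `G`, i.e. spanning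
subgraphs which are connected and have `|V| - 1` edges. -/
noncomputable def treeCount (G : Multigraph V) : ℕ :=
  Nat.card {A : Finset G.Edge // G.comps A = 1 ∧ A.card + 1 = Fintype.card V}

/-- The number of connected spanning subgraphs of `G`. -/
noncomputable def connCount (G : Multigraph V) : ℕ :=
  Nat.card {A : Finset G.Edge // G.comps A = 1}

/-- The number of spanning forests of `G`: spanning subgraphs containing no cycle,
i.e. with `|E(A)| = |V| - k(A)` (zero nullity). -/
noncomputable def forestCount (G : Multigraph V) : ℕ :=
  Nat.card {A : Finset G.Edge // A.card + G.comps A = Fintype.card V}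

/-- `σ` is an orientation of `G` if it assigns to every edge an ordered pair of
vertices whose underlying unordered pair is the pair of endpoints of the edge. -/
def IsOrientation (G : Multigraph V) (σ : G.Edge → V × V) : Prop :=
  ∀ e, s((σ e).1, (σ e).2) = G.inc e

/-- The number of acyclic orientations of `G`: orientations admitting no directed
cycle. -/
noncomputable def acyclicOrientationCount (G : Multigraph V) : ℕ :=
  Nat.card {σ : G.Edge → V × V //
    G.IsOrientation σ ∧ ∀ v : V, ¬ Relation.TransGen (fun u w => ∃ e, σ e = (u, w)) v v}

/-- A proper coloring of `G`: the two endpoints of every edge receive distinct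
colors. -/
def ProperColoring (G : Multigraph V) {α : Type} (c : V → α) : Prop :=
  ∀ e, ¬ (Sym2.map c (G.inc e)).IsDiag

/-- The number of proper colorings of `G` with `k` colors (the value `χ(G, k)` of
the chromatic polynomial at the natural number `k`). -/
noncomputable def chromCount (G : Multigraph V) (k : ℕ) : ℕ :=
  Nat.card {c : V → Fin k // G.ProperColoring c}

end Multigraph

mutual
  /-- The generator `a = e(b, id)` of the Basilica group, acting on the `n`-th
  level of the binary rooted tree: `a(1w) = 1w` and `a(0w) = 0 b(w)`. -/
  def basA : (n : ℕ) → (Fin n → Bool) → (Fin n → Bool)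
    | 0, v => v
    | n + 1, v =>
      match v 0 with
      | true => v
      | false => Fin.cons false (basB n (Fin.tail v))

  /-- The generator `b = ε(a, id)` of the Basilica group, acting on the `n`-th
  level of the binary rooted tree: `b(1w) = 0w` and `b(0w) = 1 a(w)`. -/
  def basB : (n : ℕ) → (Fin n → Bool) → (Fin n → Bool)
    | 0, v => v
    | n + 1, v =>
      match v 0 with
      | true => Fin.cons false (Fin.tail v)
      | false => Fin.cons true (basA n (Fin.tail v))
end

/-- The generator of the Basilica group indexed by a boolean tag. -/
def basGen (n : ℕ) : Bool → (Fin n → Bool) → (Fin n → Bool)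
  | true => basA n
  | false => basB n

/-- The level-`n` Schreier graph `B_n` of the Basilica group: vertices are the
binary words of length `n`, and for each generator `s ∈ {a, b}` and each vertex
`v` there is one edge joining `v` and `s(v)` (a loop when `s(v) = v`). -/
def basilica (n : ℕ) : Multigraph (Fin n → Bool) where
  Edge := Bool × (Fin n → Bool)
  fintypeEdge := inferInstance
  decEqEdge := inferInstance
  inc := fun e => s(e.2, basGen n e.1 e.2)

namespace BasilicaAux

open SimpleGraph

variable {V : Type} [Fintype V] [DecidableEq V]

/-- Reachability case analysis when H' has at most one extra edge pair (u,v) over H. -/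
lemma reach_cases {H H' : SimpleGraph V} {u v : V}
    (hadj : ∀ x y : V, H'.Adj x y → H.Adj x y ∨ s(x, y) = s(u, v)) :
    ∀ {x y : V}, H'.Reachable x y →
      H.Reachable x y ∨ (H.Reachable x u ∧ H.Reachable v y) ∨
        (H.Reachable x v ∧ H.Reachable u y) := by
  rintro x y ⟨w⟩
  induction w with
  | nil => exact Or.inl (Reachable.refl _)
  | @cons a b c h p ih =>
    rcases hadj _ _ h with h1 | h1
    · rcases ih with h2 | ⟨h2, h3⟩ | ⟨h2, h3⟩
      · exact Or.inl (h1.reachable.trans h2)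
      · exact Or.inr (Or.inl ⟨h1.reachable.trans h2, h3⟩)
      · exact Or.inr (Or.inr ⟨h1.reachable.trans h2, h3⟩)
    · rw [Sym2.eq_iff] at h1
      rcases h1 with ⟨rfl, rfl⟩ | ⟨rfl, rfl⟩
      · rcases ih with h2 | ⟨h2, h3⟩ | ⟨h2, h3⟩
        · exact Or.inr (Or.inl ⟨Reachable.refl _, h2⟩)
        · exact Or.inl (h2.symm.trans h3)
        · exact Or.inl h3
      · rcases ih with h2 | ⟨h2, h3⟩ | ⟨h2, h3⟩
        · exact Or.inr (Or.inr ⟨Reachable.refl _, h2⟩)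
        · exact Or.inl h3
        · exact Or.inl (h2.symm.trans h3)

lemma reach_iff {H H' : SimpleGraph V} {u v : V} (hle : H ≤ H')
    (hadj : ∀ x y : V, H'.Adj x y → H.Adj x y ∨ s(x, y) = s(u, v))
    (huv : H.Reachable u v) :
    ∀ x y : V, H.Reachable x y ↔ H'.Reachable x y := by
  intro x y
  constructor
  · exact fun h => h.mono hle
  · intro h
    rcases reach_cases hadj h with h1 | ⟨h1, h2⟩ | ⟨h1, h2⟩
    · exact h1
    · exact (h1.trans huv).trans h2
    · exact (h1.trans huv.symm).trans h2

lemma card_cc_eq {H H' : SimpleGraph V}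
    (h : ∀ x y : V, H.Reachable x y ↔ H'.Reachable x y) :
    Nat.card H.ConnectedComponent = Nat.card H'.ConnectedComponent :=
  Nat.card_congr (Quot.congrRight h)

lemma card_cc_le {H H' : SimpleGraph V} {u v : V} (hle : H ≤ H')
    (hadj : ∀ x y : V, H'.Adj x y → H.Adj x y ∨ s(x, y) = s(u, v)) :
    Nat.card H.ConnectedComponent ≤ Nat.card H'.ConnectedComponent + 1 := by
  classical
  have key : ∀ c c' : H.ConnectedComponent, c ≠ H.connectedComponentMk u →
      c' ≠ H.connectedComponentMk u →
      c.map (SimpleGraph.Hom.ofLE hle)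
        = c'.map (SimpleGraph.Hom.ofLE hle) → c = c' := by
    refine ConnectedComponent.ind₂ (fun x y => ?_)
    intro h1 h2 hcc
    simp only [ConnectedComponent.map_mk] at hcc
    have hr : H'.Reachable x y := SimpleGraph.ConnectedComponent.eq.mp hcc
    rcases reach_cases hadj hr with h3 | ⟨h3, h4⟩ | ⟨h3, h4⟩
    · exact ConnectedComponent.sound h3
    · exact absurd (ConnectedComponent.sound h3) h1
    · exact absurd (ConnectedComponent.sound h4.symm) h2
  have hinj : Function.Injective
      (fun c : H.ConnectedComponent =>
        if c = H.connectedComponentMk u then (none : Option H'.ConnectedComponent)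
        else some (c.map (SimpleGraph.Hom.ofLE hle))) := by
    intro c c' hcc
    dsimp only at hcc
    by_cases h1 : c = H.connectedComponentMk u <;>
      by_cases h2 : c' = H.connectedComponentMk u
    · exact h1.trans h2.symm
    · rw [if_pos h1, if_neg h2] at hcc; exact absurd hcc.symm (Option.some_ne_none _)
    · rw [if_neg h1, if_pos h2] at hcc; exact absurd hcc (Option.some_ne_none _)
    · rw [if_neg h1, if_neg h2, Option.some_inj] at hcc
      exact key c c' h1 h2 hcc
  have hb := Nat.card_le_card_of_injective _ hinj
  have : Fintype H'.ConnectedComponent := Fintype.ofFinite _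
  rw [Nat.card_eq_fintype_card (α := Option H'.ConnectedComponent),
    Fintype.card_option, ← Nat.card_eq_fintype_card] at hb
  exact hb

lemma card_cc_bot : Nat.card (⊥ : SimpleGraph V).ConnectedComponent = Fintype.card V := by
  have e : (⊥ : SimpleGraph V).ConnectedComponent ≃ V := by
    refine ⟨ConnectedComponent.lift id ?_, SimpleGraph.connectedComponentMk _, ?_, fun v => rfl⟩
    · intro v w p _
      cases p with
      | nil => rfl
      | cons h _ => exact absurd h (by simp)
    · refine ConnectedComponent.ind fun v => rfl
  rw [Nat.card_congr e, Nat.card_eq_fintype_card]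


lemma card_cc_le_of_le {H H' : SimpleGraph V} (hle : H ≤ H') :
    Nat.card H'.ConnectedComponent ≤ Nat.card H.ConnectedComponent := by
  apply Nat.card_le_card_of_surjective
    (SimpleGraph.ConnectedComponent.map (SimpleGraph.Hom.ofLE hle))
  refine ConnectedComponent.ind fun v => ⟨H.connectedComponentMk v, rfl⟩

open Finset

variable (G : Multigraph V)

lemma toSimple_adj (A : Finset G.Edge) (x y : V) :
    (G.toSimple A).Adj x y ↔
      x ≠ y ∧ ∃ e ∈ A, (G.inc e = s(x, y) ∨ G.inc e = s(y, x)) := by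
  simp only [Multigraph.toSimple, SimpleGraph.fromRel_adj]
  constructor
  · rintro ⟨hne, ⟨e, he, h⟩ | ⟨e, he, h⟩⟩
    · exact ⟨hne, e, he, Or.inl h⟩
    · exact ⟨hne, e, he, Or.inr h⟩
  · rintro ⟨hne, e, he, h | h⟩
    · exact ⟨hne, Or.inl ⟨e, he, h⟩⟩
    · exact ⟨hne, Or.inr ⟨e, he, h⟩⟩

lemma toSimple_mono {A B : Finset G.Edge} (h : A ⊆ B) : G.toSimple A ≤ G.toSimple B := by
  intro x y
  rw [toSimple_adj, toSimple_adj]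
  rintro ⟨hne, e, he, hh⟩
  exact ⟨hne, e, h he, hh⟩

lemma exists_endpoints (a : G.Edge) : ∃ u v : V, G.inc a = s(u, v) := by
  have h : ∀ z : Sym2 V, ∃ u v : V, z = s(u, v) := Sym2.ind fun u v => ⟨u, v, rfl⟩
  exact h (G.inc a)

lemma insert_adj_cases {A : Finset G.Edge} {a : G.Edge} {u v : V}
    (hinc : G.inc a = s(u, v)) :
    ∀ x y : V, (G.toSimple (insert a A)).Adj x y →
      (G.toSimple A).Adj x y ∨ s(x, y) = s(u, v) := by
  intro x y h
  rw [toSimple_adj] at h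
  obtain ⟨hne, e, he, hh⟩ := h
  rcases Finset.mem_insert.mp he with rfl | he
  · rcases hh with hh | hh
    · exact Or.inr (hh ▸ hinc ▸ rfl)
    · right
      rw [Sym2.eq_swap]
      exact hh ▸ hinc ▸ rfl
  · exact Or.inl ((toSimple_adj G A x y).mpr ⟨hne, e, he, hh⟩)

lemma comps_insert_eq {A : Finset G.Edge} {a : G.Edge} {u v : V}
    (hinc : G.inc a = s(u, v)) (hr : (G.toSimple A).Reachable u v) :
    G.comps (insert a A) = G.comps A :=
  (card_cc_eq (reach_iff (toSimple_mono G (Finset.subset_insert a A))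
    (insert_adj_cases G hinc) hr)).symm

lemma comps_le_insert (A : Finset G.Edge) (a : G.Edge) :
    G.comps A ≤ G.comps (insert a A) + 1 := by
  obtain ⟨u, v, hinc⟩ := exists_endpoints G a
  exact card_cc_le (toSimple_mono G (Finset.subset_insert a A)) (insert_adj_cases G hinc)

lemma toSimple_empty : G.toSimple (∅ : Finset G.Edge) = ⊥ := by
  ext x y
  simp [toSimple_adj]

lemma card_le_comps_add_card (A : Finset G.Edge) :
    Fintype.card V ≤ G.comps A + A.card := by
  classical
  induction A using Finset.induction_on with
  | empty =>
    have : G.comps ∅ = Fintype.card V := by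
      rw [Multigraph.comps, toSimple_empty, card_cc_bot]
    simp [this]
  | @insert a A ha ih =>
    have h1 := comps_le_insert G A a
    rw [Finset.card_insert_of_notMem ha]
    omega

lemma comps_eq_one_iff (A : Finset G.Edge) :
    G.comps A = 1 ↔ Nonempty V ∧ ∀ x y : V, (G.toSimple A).Reachable x y := by
  rw [Multigraph.comps, Nat.card_eq_one_iff_unique]
  constructor
  · rintro ⟨hsub, ⟨c⟩⟩
    have hne : Nonempty V := by
      revert c
      exact ConnectedComponent.ind fun v => ⟨v⟩
    refine ⟨hne, fun x y => ?_⟩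
    have : (G.toSimple A).connectedComponentMk x = (G.toSimple A).connectedComponentMk y :=
      Subsingleton.elim _ _
    exact SimpleGraph.ConnectedComponent.eq.mp this
  · rintro ⟨⟨v⟩, h⟩
    refine ⟨⟨?_⟩, ⟨(G.toSimple A).connectedComponentMk v⟩⟩
    refine ConnectedComponent.ind₂ fun x y => ?_
    exact ConnectedComponent.sound (h x y)


section Main

variable {ι : Type} [Fintype ι] [DecidableEq ι]

lemma comps_sdiff_eq_one (f : G.Edge → ι) (hconn : G.comps Finset.univ = 1)
    (hcyc : ∀ (e : G.Edge) (A : Finset G.Edge),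
      (∀ e', f e' = f e → e' ≠ e → e' ∈ A) →
      ∀ u v : V, G.inc e = s(u, v) → (G.toSimple A).Reachable u v)
    (S : Finset G.Edge) (hS : ∀ e₁ ∈ S, ∀ e₂ ∈ S, f e₁ = f e₂ → e₁ = e₂) :
    G.comps (Finset.univ \ S) = 1 := by
  classical
  induction S using Finset.induction_on with
  | empty => simpa using hconn
  | @insert a S ha ih =>
    have hS' : ∀ e₁ ∈ S, ∀ e₂ ∈ S, f e₁ = f e₂ → e₁ = e₂ := fun e₁ h1 e₂ h2 =>
      hS e₁ (Finset.mem_insert_of_mem h1) e₂ (Finset.mem_insert_of_mem h2)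
    have hmem : a ∈ Finset.univ \ S := Finset.mem_sdiff.mpr ⟨Finset.mem_univ a, ha⟩
    have hins : insert a ((Finset.univ \ S).erase a) = Finset.univ \ S :=
      Finset.insert_erase hmem
    have hfib : ∀ e', f e' = f a → e' ≠ a → e' ∈ (Finset.univ \ S).erase a := by
      intro e' hfe hne
      refine Finset.mem_erase.mpr ⟨hne, Finset.mem_sdiff.mpr ⟨Finset.mem_univ _, fun hmemS => ?_⟩⟩
      exact hne (hS e' (Finset.mem_insert_of_mem hmemS) a (Finset.mem_insert_self a S) hfe)
    obtain ⟨u, v, hinc⟩ := exists_endpoints G a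
    have hreach := hcyc a ((Finset.univ \ S).erase a) hfib u v hinc
    have h1 : G.comps (insert a ((Finset.univ \ S).erase a))
        = G.comps ((Finset.univ \ S).erase a) := comps_insert_eq G hinc hreach
    rw [hins] at h1
    rw [Finset.sdiff_insert, ← h1]
    exact ih hS'

theorem treeCount_eq_prod (f : G.Edge → ι) (hsurj : Function.Surjective f)
    (hconn : G.comps Finset.univ = 1)
    (hcard : Fintype.card G.Edge + 1 = Fintype.card V + Fintype.card ι)
    (hcyc : ∀ (e : G.Edge) (A : Finset G.Edge),
      (∀ e', f e' = f e → e' ≠ e → e' ∈ A) →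
      ∀ u v : V, G.inc e = s(u, v) → (G.toSimple A).Reachable u v) :
    G.treeCount = ∏ i : ι, (Finset.univ.filter fun e => f e = i).card := by
  classical
  have hVpos : 0 < Fintype.card V := by
    have := (comps_eq_one_iff G Finset.univ).mp hconn
    exact Fintype.card_pos_iff.mpr this.1
  have hEcard : Fintype.card ι ≤ Fintype.card G.Edge := Fintype.card_le_of_surjective f hsurj
  set F : (∀ i : ι, {e : G.Edge // f e = i}) → Finset G.Edge :=
    fun g => Finset.univ \ Finset.univ.image fun i => (g i).1 with hF
  have hginj : ∀ g : ∀ i : ι, {e : G.Edge // f e = i},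
      Function.Injective fun i => (g i).1 := by
    intro g i j hij
    have : f (g i).1 = f (g j).1 := congrArg f hij
    rwa [(g i).2, (g j).2] at this
  have himgcard : ∀ g : ∀ i : ι, {e : G.Edge // f e = i},
      (Finset.univ.image fun i => (g i).1).card = Fintype.card ι := by
    intro g
    rw [Finset.card_image_of_injective _ (hginj g), Finset.card_univ]
  have hFcard : ∀ g, (F g).card + 1 = Fintype.card V := by
    intro g
    rw [hF]
    rw [Finset.card_sdiff_of_subset (Finset.subset_univ _), himgcard g, Finset.card_univ]
    omega
  have hFcomps : ∀ g, G.comps (F g) = 1 := by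
    intro g
    refine comps_sdiff_eq_one G f hconn hcyc _ ?_
    intro e₁ h1 e₂ h2 hfe
    obtain ⟨i, -, rfl⟩ := Finset.mem_image.mp h1
    obtain ⟨j, -, rfl⟩ := Finset.mem_image.mp h2
    rw [(g i).2, (g j).2] at hfe
    rw [hfe]
  set F' : (∀ i : ι, {e : G.Edge // f e = i}) →
      {A : Finset G.Edge // G.comps A = 1 ∧ A.card + 1 = Fintype.card V} :=
    fun g => ⟨F g, hFcomps g, hFcard g⟩ with hF'
  have hbij : Function.Bijective F' := by
    constructor
    · intro g g' hgg
      have hfg : F g = F g' := congrArg Subtype.val hgg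
      funext i
      have hmem : (g i).1 ∈ Finset.univ.image fun j => (g' j).1 := by
        by_contra hnot
        have : (g i).1 ∈ F g' := Finset.mem_sdiff.mpr ⟨Finset.mem_univ _, hnot⟩
        rw [← hfg, hF] at this
        exact (Finset.mem_sdiff.mp this).2
          (Finset.mem_image.mpr ⟨i, Finset.mem_univ i, rfl⟩)
      obtain ⟨j, -, hj⟩ := Finset.mem_image.mp hmem
      have : f ((g' j).1) = f ((g i).1) := by rw [hj]
      rw [(g' j).2, (g i).2] at this
      subst this
      exact Subtype.ext hj.symm
    · rintro ⟨A, hA1, hA2⟩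
      have hT'card : (Finset.univ \ A).card = Fintype.card ι := by
        rw [Finset.card_sdiff_of_subset (Finset.subset_univ _), Finset.card_univ]
        have := Finset.card_le_univ A
        omega
      have hhit : ∀ i : ι, ∃ e, e ∈ Finset.univ \ A ∧ f e = i := by
        intro i
        by_contra hnot
        push_neg at hnot
        have hfib : ∀ e', f e' = i → e' ∈ A := by
          intro e' hfe
          by_contra hA
          exact hnot e' (Finset.mem_sdiff.mpr ⟨Finset.mem_univ _, hA⟩) hfe
        obtain ⟨e₀, he₀⟩ := hsurj i
        have he₀A : e₀ ∈ A := hfib e₀ he₀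
        obtain ⟨u, v, hinc⟩ := exists_endpoints G e₀
        have hreach := hcyc e₀ (A.erase e₀)
          (fun e' hfe hne => Finset.mem_erase.mpr ⟨hne, hfib e' (by rw [hfe, he₀])⟩) u v hinc
        have h1 : G.comps (insert e₀ (A.erase e₀)) = G.comps (A.erase e₀) :=
          comps_insert_eq G hinc hreach
        rw [Finset.insert_erase he₀A] at h1
        have h2 := card_le_comps_add_card G (A.erase e₀)
        rw [← h1, hA1, Finset.card_erase_of_mem he₀A] at h2
        have : 1 ≤ A.card := Finset.card_pos.mpr ⟨e₀, he₀A⟩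
        omega
      choose gg hgg1 hgg2 using hhit
      refine ⟨fun i => ⟨gg i, hgg2 i⟩, ?_⟩
      have hsubset : (Finset.univ.image fun i => gg i) ⊆ Finset.univ \ A := by
        intro e he
        obtain ⟨i, -, rfl⟩ := Finset.mem_image.mp he
        exact hgg1 i
      have himg : (Finset.univ.image fun i => gg i) = Finset.univ \ A := by
        apply Finset.eq_of_subset_of_card_le hsubset
        rw [hT'card]
        exact le_of_eq (himgcard (fun i => ⟨gg i, hgg2 i⟩)).symm
      apply Subtype.ext
      show F _ = A
      rw [hF]
      simp only
      rw [show (Finset.univ.image fun i => ((⟨gg i, hgg2 i⟩ :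
        {e : G.Edge // f e = i}) : {e : G.Edge // f e = i}).1) = Finset.univ.image fun i => gg i
        from rfl, himg, Finset.sdiff_sdiff_self_left, Finset.univ_inter]
  rw [Multigraph.treeCount, ← Nat.card_congr (Equiv.ofBijective F' hbij),
    Nat.card_eq_fintype_card, Fintype.card_pi]
  congr 1
  funext i
  rw [Fintype.card_subtype]

end Main


section Orbits

open Equiv Equiv.Perm

variable {α : Type} [Fintype α] [DecidableEq α] {β : Type} [Fintype β] [DecidableEq β]

def oSetoid (σ : Equiv.Perm α) : Setoid α :=
  ⟨σ.SameCycle, ⟨Equiv.Perm.SameCycle.refl σ, Equiv.Perm.SameCycle.symm,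
    Equiv.Perm.SameCycle.trans⟩⟩

abbrev OQ (σ : Equiv.Perm α) := Quotient (oSetoid σ)

noncomputable instance (σ : Equiv.Perm α) : Fintype (OQ σ) := Fintype.ofFinite _

lemma oq_sound {σ : Equiv.Perm α} {x y : α} (h : σ.SameCycle x y) :
    (⟦x⟧ : OQ σ) = ⟦y⟧ := Quotient.sound h

lemma oq_exact {σ : Equiv.Perm α} {x y : α} (h : (⟦x⟧ : OQ σ) = ⟦y⟧) :
    σ.SameCycle x y := Quotient.exact h

noncomputable def osize (σ : Equiv.Perm α) : OQ σ → ℕ :=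
  Quotient.lift (fun x => Fintype.card {y // σ.SameCycle x y}) (by
    intro x x' (h : σ.SameCycle x x')
    apply Fintype.card_congr
    exact Equiv.subtypeEquivRight fun y => ⟨fun hy => h.symm.trans hy, fun hy => h.trans hy⟩)

lemma osize_mk (σ : Equiv.Perm α) (x : α) :
    osize σ ⟦x⟧ = Fintype.card {y // σ.SameCycle x y} := rfl

noncomputable def oc (σ : Equiv.Perm α) : ℕ := Fintype.card (OQ σ)

noncomputable def op (σ : Equiv.Perm α) : ℕ := ∏ q : OQ σ, osize σ q

lemma pow_apply_congr {σ : Equiv.Perm α} {τ : Equiv.Perm β} (e : α ≃ β)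
    (h : ∀ x, τ (e x) = e (σ x)) : ∀ (k : ℕ) (x : α), (τ ^ k) (e x) = e ((σ ^ k) x) := by
  intro k
  induction k with
  | zero => intro x; simp
  | succ k ih =>
    intro x
    rw [pow_succ, Equiv.Perm.mul_apply, h x, ih (σ x), ← Equiv.Perm.mul_apply, ← pow_succ]

lemma sameCycle_of_pow {σ : Equiv.Perm α} {x y : α} (i : ℕ) (h : (σ ^ i) x = y) :
    σ.SameCycle x y := ⟨(i : ℤ), by rw [zpow_natCast]; exact h⟩

lemma sameCycle_map {σ : Equiv.Perm α} {τ : Equiv.Perm β} (e : α ≃ β)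
    (h : ∀ x, τ (e x) = e (σ x)) {x y : α} (hxy : σ.SameCycle x y) :
    τ.SameCycle (e x) (e y) := by
  obtain ⟨i, -, hi⟩ := hxy.exists_pow_eq'
  exact sameCycle_of_pow i (by rw [pow_apply_congr e h i x, hi])

lemma sameCycle_congr {σ : Equiv.Perm α} {τ : Equiv.Perm β} (e : α ≃ β)
    (h : ∀ x, τ (e x) = e (σ x)) (x y : α) :
    σ.SameCycle x y ↔ τ.SameCycle (e x) (e y) := by
  constructor
  · exact sameCycle_map e h
  · intro hxy
    have h' : ∀ z : β, σ (e.symm z) = e.symm (τ z) := by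
      intro z
      conv_rhs => rw [← e.apply_symm_apply z]
      rw [h (e.symm z), e.symm_apply_apply]
    have := sameCycle_map e.symm h' hxy
    rwa [e.symm_apply_apply, e.symm_apply_apply] at this

noncomputable def oqCongr {σ : Equiv.Perm α} {τ : Equiv.Perm β} (e : α ≃ β)
    (h : ∀ x, τ (e x) = e (σ x)) : OQ σ ≃ OQ τ :=
  Quotient.congr e (sameCycle_congr e h)

lemma oc_congr {σ : Equiv.Perm α} {τ : Equiv.Perm β} (e : α ≃ β)
    (h : ∀ x, τ (e x) = e (σ x)) : oc τ = oc σ :=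
  Fintype.card_congr (oqCongr e h).symm

lemma osize_congr {σ : Equiv.Perm α} {τ : Equiv.Perm β} (e : α ≃ β)
    (h : ∀ x, τ (e x) = e (σ x)) (x : α) :
    osize τ ⟦e x⟧ = osize σ ⟦x⟧ := by
  rw [osize_mk, osize_mk]
  exact Fintype.card_congr (Equiv.subtypeEquiv e fun z => sameCycle_congr e h x z).symm

lemma op_congr {σ : Equiv.Perm α} {τ : Equiv.Perm β} (e : α ≃ β)
    (h : ∀ x, τ (e x) = e (σ x)) : op τ = op σ := by
  rw [op, op]
  refine (Fintype.prod_equiv (oqCongr e h) _ _ ?_).symm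
  refine Quotient.ind fun x => ?_
  show osize σ ⟦x⟧ = osize τ ((oqCongr e h) ⟦x⟧)
  have : (oqCongr e h) ⟦x⟧ = ⟦e x⟧ := rfl
  rw [this, osize_congr e h x]

end Orbits


section SumPerm

open Equiv Equiv.Perm Sum

variable {α : Type} [Fintype α] [DecidableEq α] {β : Type} [Fintype β] [DecidableEq β]

def sumPerm (σ : Equiv.Perm α) (τ : Equiv.Perm β) : Equiv.Perm (α ⊕ β) :=
  Equiv.sumCongr σ τ

@[simp] lemma sumPerm_inl (σ : Equiv.Perm α) (τ : Equiv.Perm β) (x : α) :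
    sumPerm σ τ (inl x) = inl (σ x) := rfl

@[simp] lemma sumPerm_inr (σ : Equiv.Perm α) (τ : Equiv.Perm β) (y : β) :
    sumPerm σ τ (inr y) = inr (τ y) := rfl

lemma sumPerm_pow (σ : Equiv.Perm α) (τ : Equiv.Perm β) (k : ℕ) :
    sumPerm σ τ ^ k = sumPerm (σ ^ k) (τ ^ k) := by
  induction k with
  | zero =>
    ext u
    rcases u with u | u <;> simp [sumPerm]
  | succ k ih =>
    ext u
    rw [pow_succ, Equiv.Perm.mul_apply, ih]
    rcases u with u | u <;> simp [pow_succ]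

lemma sc_sum_inl_inl {σ : Equiv.Perm α} {τ : Equiv.Perm β} {x y : α} :
    (sumPerm σ τ).SameCycle (inl x) (inl y) ↔ σ.SameCycle x y := by
  constructor
  · intro h
    obtain ⟨i, -, hi⟩ := h.exists_pow_eq'
    rw [sumPerm_pow] at hi
    exact sameCycle_of_pow i (Sum.inl.inj hi)
  · intro h
    obtain ⟨i, -, hi⟩ := h.exists_pow_eq'
    exact sameCycle_of_pow i (by rw [sumPerm_pow, sumPerm_inl, hi])

lemma sc_sum_inr_inr {σ : Equiv.Perm α} {τ : Equiv.Perm β} {x y : β} :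
    (sumPerm σ τ).SameCycle (inr x) (inr y) ↔ τ.SameCycle x y := by
  constructor
  · intro h
    obtain ⟨i, -, hi⟩ := h.exists_pow_eq'
    rw [sumPerm_pow] at hi
    exact sameCycle_of_pow i (Sum.inr.inj hi)
  · intro h
    obtain ⟨i, -, hi⟩ := h.exists_pow_eq'
    exact sameCycle_of_pow i (by rw [sumPerm_pow, sumPerm_inr, hi])

lemma sc_sum_not_inl_inr {σ : Equiv.Perm α} {τ : Equiv.Perm β} {x : α} {y : β} :
    ¬ (sumPerm σ τ).SameCycle (inl x) (inr y) := by
  intro h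
  obtain ⟨i, -, hi⟩ := h.exists_pow_eq'
  rw [sumPerm_pow] at hi
  exact Sum.inl_ne_inr hi

noncomputable def oqSum (σ : Equiv.Perm α) (τ : Equiv.Perm β) :
    OQ (sumPerm σ τ) ≃ OQ σ ⊕ OQ τ where
  toFun := Quotient.lift
    (fun u => match u with
      | inl x => Sum.inl (⟦x⟧ : OQ σ)
      | inr y => Sum.inr (⟦y⟧ : OQ τ)) (by
    rintro (x | x) (y | y) h
    · exact congrArg Sum.inl (oq_sound (sc_sum_inl_inl.mp h))
    · exact absurd h sc_sum_not_inl_inr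
    · exact absurd (SameCycle.symm h) sc_sum_not_inl_inr
    · exact congrArg Sum.inr (oq_sound (sc_sum_inr_inr.mp h)))
  invFun := Sum.elim
    (Quotient.lift (fun x => (⟦inl x⟧ : OQ (sumPerm σ τ)))
      (fun x y h => oq_sound (sc_sum_inl_inl.mpr h)))
    (Quotient.lift (fun y => (⟦inr y⟧ : OQ (sumPerm σ τ)))
      (fun x y h => oq_sound (sc_sum_inr_inr.mpr h)))
  left_inv := by
    refine Quotient.ind ?_
    rintro (x | x) <;> rfl
  right_inv := by
    rintro (q | q) <;> induction q using Quotient.ind <;> rfl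

lemma oc_sum (σ : Equiv.Perm α) (τ : Equiv.Perm β) :
    oc (sumPerm σ τ) = oc σ + oc τ := by
  rw [oc, Fintype.card_congr (oqSum σ τ), Fintype.card_sum, oc, oc]

def scSubtypeInl (σ : Equiv.Perm α) (τ : Equiv.Perm β) (x : α) :
    {u : α ⊕ β // (sumPerm σ τ).SameCycle (inl x) u} ≃ {y : α // σ.SameCycle x y} where
  toFun := fun u => match u with
    | ⟨inl y, h⟩ => ⟨y, sc_sum_inl_inl.mp h⟩
    | ⟨inr y, h⟩ => absurd h sc_sum_not_inl_inr
  invFun := fun y => ⟨inl y.1, sc_sum_inl_inl.mpr y.2⟩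
  left_inv := by
    rintro ⟨u | u, h⟩
    · rfl
    · exact absurd h sc_sum_not_inl_inr
  right_inv := fun y => rfl

def scSubtypeInr (σ : Equiv.Perm α) (τ : Equiv.Perm β) (x : β) :
    {u : α ⊕ β // (sumPerm σ τ).SameCycle (inr x) u} ≃ {y : β // τ.SameCycle x y} where
  toFun := fun u => match u with
    | ⟨inr y, h⟩ => ⟨y, sc_sum_inr_inr.mp h⟩
    | ⟨inl y, h⟩ => absurd h.symm sc_sum_not_inl_inr
  invFun := fun y => ⟨inr y.1, sc_sum_inr_inr.mpr y.2⟩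
  left_inv := by
    rintro ⟨u | u, h⟩
    · exact absurd h.symm sc_sum_not_inl_inr
    · rfl
  right_inv := fun y => rfl

lemma op_sum (σ : Equiv.Perm α) (τ : Equiv.Perm β) :
    op (sumPerm σ τ) = op σ * op τ := by
  rw [op]
  rw [Fintype.prod_equiv (oqSum σ τ)
    (fun q => osize (sumPerm σ τ) q)
    (fun s => Sum.elim (fun q => osize σ q) (fun q => osize τ q) s)
    (by
      refine Quotient.ind ?_
      rintro (x | x)
      · exact Fintype.card_congr (scSubtypeInl σ τ x)
      · exact Fintype.card_congr (scSubtypeInr σ τ x))]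
  rw [Fintype.prod_sum_type]
  rfl

lemma sc_one_iff {x y : α} : (1 : Equiv.Perm α).SameCycle x y ↔ x = y :=
  Equiv.Perm.sameCycle_one

noncomputable def oqOne : OQ (1 : Equiv.Perm α) ≃ α where
  toFun := Quotient.lift id (fun x y h => sc_one_iff.mp h)
  invFun := fun x => ⟦x⟧
  left_inv := Quotient.ind fun x => rfl
  right_inv := fun x => rfl

lemma oc_one : oc (1 : Equiv.Perm α) = Fintype.card α :=
  Fintype.card_congr oqOne

lemma osize_one (x : α) : osize (1 : Equiv.Perm α) ⟦x⟧ = 1 := by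
  rw [osize_mk]
  rw [Fintype.card_eq_one_iff]
  refine ⟨⟨x, Equiv.Perm.SameCycle.refl 1 x⟩, ?_⟩
  rintro ⟨y, hy⟩
  exact Subtype.ext (sc_one_iff.mp hy).symm

lemma op_one : op (1 : Equiv.Perm α) = 1 := by
  rw [op]
  refine Finset.prod_eq_one ?_
  intro q _
  induction q using Quotient.ind
  exact osize_one _

end SumPerm


section DblPerm

open Equiv Equiv.Perm Sum

variable {α : Type} [Fintype α] [DecidableEq α]

def dbl (π : Equiv.Perm α) : Equiv.Perm (α ⊕ α) where
  toFun := fun u => match u with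
    | inl x => inr (π x)
    | inr x => inl x
  invFun := fun u => match u with
    | inl x => inr x
    | inr x => inl (π.symm x)
  left_inv := by
    rintro (x | x) <;> simp
  right_inv := by
    rintro (x | x) <;> simp

@[simp] lemma dbl_inl (π : Equiv.Perm α) (x : α) : dbl π (inl x) = inr (π x) := rfl
@[simp] lemma dbl_inr (π : Equiv.Perm α) (x : α) : dbl π (inr x) = inl x := rfl

lemma dbl_sq (π : Equiv.Perm α) : dbl π ^ 2 = sumPerm π π := by
  ext u
  rw [sq, Equiv.Perm.mul_apply]
  rcases u with x | x <;> simp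

lemma dbl_pow_even (π : Equiv.Perm α) (k : ℕ) :
    dbl π ^ (2 * k) = sumPerm (π ^ k) (π ^ k) := by
  rw [pow_mul, dbl_sq, sumPerm_pow]

lemma dbl_pow_odd_inl (π : Equiv.Perm α) (k : ℕ) (x : α) :
    (dbl π ^ (2 * k + 1)) (inl x) = inr ((π ^ (k + 1)) x) := by
  rw [pow_succ, Equiv.Perm.mul_apply, dbl_inl, dbl_pow_even, sumPerm_inr, ← Equiv.Perm.mul_apply,
    ← pow_succ]

lemma dbl_pow_odd_inr (π : Equiv.Perm α) (k : ℕ) (x : α) :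
    (dbl π ^ (2 * k + 1)) (inr x) = inl ((π ^ k) x) := by
  rw [pow_succ, Equiv.Perm.mul_apply, dbl_inr, dbl_pow_even, sumPerm_inl]

lemma sc_dbl_inl_inl {π : Equiv.Perm α} {x y : α} :
    (dbl π).SameCycle (inl x) (inl y) ↔ π.SameCycle x y := by
  constructor
  · intro h
    obtain ⟨i, -, hi⟩ := h.exists_pow_eq'
    rcases Nat.even_or_odd i with ⟨k, hk⟩ | ⟨k, hk⟩
    · subst hk
      rw [← two_mul, dbl_pow_even] at hi
      exact sameCycle_of_pow k (Sum.inl.inj hi)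
    · subst hk
      rw [dbl_pow_odd_inl] at hi
      exact absurd hi (Sum.inr_ne_inl)
  · intro h
    obtain ⟨i, -, hi⟩ := h.exists_pow_eq'
    exact sameCycle_of_pow (2 * i) (by rw [dbl_pow_even, sumPerm_inl, hi])

lemma sc_dbl_inr_inr {π : Equiv.Perm α} {x y : α} :
    (dbl π).SameCycle (inr x) (inr y) ↔ π.SameCycle x y := by
  constructor
  · intro h
    obtain ⟨i, -, hi⟩ := h.exists_pow_eq'
    rcases Nat.even_or_odd i with ⟨k, hk⟩ | ⟨k, hk⟩
    · subst hk
      rw [← two_mul, dbl_pow_even] at hi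
      exact sameCycle_of_pow k (Sum.inr.inj hi)
    · subst hk
      rw [dbl_pow_odd_inr] at hi
      exact absurd hi (Sum.inl_ne_inr)
  · intro h
    obtain ⟨i, -, hi⟩ := h.exists_pow_eq'
    exact sameCycle_of_pow (2 * i) (by rw [dbl_pow_even, sumPerm_inr, hi])

lemma sc_dbl_inr_inl {π : Equiv.Perm α} {x y : α} :
    (dbl π).SameCycle (inr x) (inl y) ↔ π.SameCycle x y := by
  constructor
  · intro h
    obtain ⟨i, -, hi⟩ := h.exists_pow_eq'
    rcases Nat.even_or_odd i with ⟨k, hk⟩ | ⟨k, hk⟩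
    · subst hk
      rw [← two_mul, dbl_pow_even] at hi
      exact absurd hi (Sum.inr_ne_inl)
    · subst hk
      rw [dbl_pow_odd_inr] at hi
      exact sameCycle_of_pow k (Sum.inl.inj hi)
  · intro h
    obtain ⟨i, -, hi⟩ := h.exists_pow_eq'
    exact sameCycle_of_pow (2 * i + 1) (by rw [dbl_pow_odd_inr, hi])

lemma sc_dbl_inl_inr {π : Equiv.Perm α} {x y : α} :
    (dbl π).SameCycle (inl x) (inr y) ↔ π.SameCycle x y := by
  constructor
  · intro h
    obtain ⟨i, -, hi⟩ := h.exists_pow_eq'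
    rcases Nat.even_or_odd i with ⟨k, hk⟩ | ⟨k, hk⟩
    · subst hk
      rw [← two_mul, dbl_pow_even] at hi
      exact absurd hi (Sum.inl_ne_inr)
    · subst hk
      rw [dbl_pow_odd_inl] at hi
      exact sameCycle_of_pow (k + 1) (Sum.inr.inj hi)
  · intro h
    obtain ⟨i, -, hi⟩ := h.exists_pow_eq'
    rcases i with _ | i
    · have hord : (π ^ orderOf π) x = y := by
        rw [pow_orderOf_eq_one]
        simpa using hi
      obtain ⟨m, hm⟩ := Nat.exists_eq_add_of_lt (orderOf_pos π)
      refine sameCycle_of_pow (2 * m + 1) ?_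
      rw [dbl_pow_odd_inl]
      rw [show m + 1 = orderOf π from by omega, hord]
    · refine sameCycle_of_pow (2 * i + 1) ?_
      rw [dbl_pow_odd_inl]
      rw [show i + 1 = i.succ from rfl, hi]

def stripSC {π : Equiv.Perm α} :
    ∀ u v : α ⊕ α, ((dbl π).SameCycle u v ↔ π.SameCycle (Sum.elim id id u) (Sum.elim id id v))
  | inl x, inl y => by simpa using sc_dbl_inl_inl
  | inl x, inr y => by simpa using sc_dbl_inl_inr
  | inr x, inl y => by simpa using sc_dbl_inr_inl
  | inr x, inr y => by simpa using sc_dbl_inr_inr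

noncomputable def oqDbl (π : Equiv.Perm α) : OQ (dbl π) ≃ OQ π where
  toFun := Quotient.lift (fun u => (⟦Sum.elim id id u⟧ : OQ π))
    (fun u v h => oq_sound ((stripSC u v).mp h))
  invFun := Quotient.lift (fun x => (⟦inl x⟧ : OQ (dbl π)))
    (fun x y h => oq_sound (sc_dbl_inl_inl.mpr h))
  left_inv := by
    refine Quotient.ind ?_
    rintro (x | x)
    · rfl
    · exact oq_sound (sc_dbl_inl_inr.mpr (Equiv.Perm.SameCycle.refl π x))
  right_inv := Quotient.ind fun x => rfl

lemma oc_dbl (π : Equiv.Perm α) : oc (dbl π) = oc π :=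
  Fintype.card_congr (oqDbl π)

def dblSubtype (π : Equiv.Perm α) (x : α) :
    {u : α ⊕ α // (dbl π).SameCycle (inl x) u}
      ≃ {y : α // π.SameCycle x y} ⊕ {y : α // π.SameCycle x y} where
  toFun := fun u => match u with
    | ⟨inl y, h⟩ => Sum.inl ⟨y, sc_dbl_inl_inl.mp h⟩
    | ⟨inr y, h⟩ => Sum.inr ⟨y, sc_dbl_inl_inr.mp h⟩
  invFun := fun s => match s with
    | Sum.inl ⟨y, h⟩ => ⟨inl y, sc_dbl_inl_inl.mpr h⟩
    | Sum.inr ⟨y, h⟩ => ⟨inr y, sc_dbl_inl_inr.mpr h⟩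
  left_inv := by rintro ⟨u | u, h⟩ <;> rfl
  right_inv := by rintro (⟨y, h⟩ | ⟨y, h⟩) <;> rfl

lemma osize_dbl (π : Equiv.Perm α) (x : α) :
    osize (dbl π) ⟦inl x⟧ = 2 * osize π ⟦x⟧ := by
  rw [osize_mk, osize_mk, Fintype.card_congr (dblSubtype π x), Fintype.card_sum]
  omega

lemma op_dbl (π : Equiv.Perm α) : op (dbl π) = 2 ^ (oc π) * op π := by
  rw [op]
  rw [Fintype.prod_equiv (oqDbl π) (fun q => osize (dbl π) q)
    (fun q => 2 * osize π q)
    (by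
      refine Quotient.ind ?_
      rintro (x | x)
      · exact osize_dbl π x
      · show osize (dbl π) ⟦inr x⟧ = 2 * osize π ⟦Sum.elim id id (inr x)⟧
        have : (⟦inr x⟧ : OQ (dbl π)) = ⟦inl x⟧ :=
          oq_sound (sc_dbl_inr_inl.mpr (Equiv.Perm.SameCycle.refl π x))
        rw [this]
        exact osize_dbl π x)]
  rw [Finset.prod_mul_distrib, Finset.prod_const, Finset.card_univ, op, oc]

end DblPerm


section Basilica

open Sum

lemma basA_succ_true {n : ℕ} {v : Fin (n + 1) → Bool} (h : v 0 = true) :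
    basA (n + 1) v = v := by
  rw [show basA (n + 1) v = match v 0 with
    | true => v
    | false => Fin.cons false (basB n (Fin.tail v)) from rfl, h]

lemma basA_succ_false {n : ℕ} {v : Fin (n + 1) → Bool} (h : v 0 = false) :
    basA (n + 1) v = Fin.cons false (basB n (Fin.tail v)) := by
  rw [show basA (n + 1) v = match v 0 with
    | true => v
    | false => Fin.cons false (basB n (Fin.tail v)) from rfl, h]

lemma basB_succ_true {n : ℕ} {v : Fin (n + 1) → Bool} (h : v 0 = true) :
    basB (n + 1) v = Fin.cons false (Fin.tail v) := by
  rw [show basB (n + 1) v = match v 0 with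
    | true => Fin.cons false (Fin.tail v)
    | false => Fin.cons true (basA n (Fin.tail v)) from rfl, h]

lemma basB_succ_false {n : ℕ} {v : Fin (n + 1) → Bool} (h : v 0 = false) :
    basB (n + 1) v = Fin.cons true (basA n (Fin.tail v)) := by
  rw [show basB (n + 1) v = match v 0 with
    | true => Fin.cons false (Fin.tail v)
    | false => Fin.cons true (basA n (Fin.tail v)) from rfl, h]

lemma bas_bijective : ∀ n : ℕ, Function.Bijective (basA n) ∧ Function.Bijective (basB n) := by
  intro n
  induction n with
  | zero =>
    constructor <;> exact Function.bijective_id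
  | succ n ih =>
    have cons_eq : ∀ (b : Bool) (x y : Fin n → Bool),
        (Fin.cons b x : Fin (n+1) → Bool) = Fin.cons b y → x = y := by
      intro b x y h
      have := congrArg Fin.tail h
      rwa [Fin.tail_cons, Fin.tail_cons] at this
    have recon : ∀ (v w : Fin (n+1) → Bool), v 0 = w 0 → Fin.tail v = Fin.tail w → v = w := by
      intro v w h0 ht
      rw [← Fin.cons_self_tail v, ← Fin.cons_self_tail w, h0, ht]
    constructor
    · rw [Fintype.bijective_iff_injective_and_card]
      refine ⟨?_, rfl⟩
      intro v w h
      cases hv : v 0 <;> cases hw : w 0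
      · rw [basA_succ_false hv, basA_succ_false hw] at h
        exact recon v w (hv.trans hw.symm)
          (ih.2.1 (cons_eq false _ _ h))
      · rw [basA_succ_false hv, basA_succ_true hw] at h
        exact absurd (congrFun h.symm 0) (by rw [hw, Fin.cons_zero]; simp)
      · rw [basA_succ_true hv, basA_succ_false hw] at h
        exact absurd (congrFun h 0) (by rw [hv, Fin.cons_zero]; simp)
      · rw [basA_succ_true hv, basA_succ_true hw] at h
        exact h
    · rw [Fintype.bijective_iff_injective_and_card]
      refine ⟨?_, rfl⟩
      intro v w h
      cases hv : v 0 <;> cases hw : w 0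
      · rw [basB_succ_false hv, basB_succ_false hw] at h
        exact recon v w (hv.trans hw.symm) (ih.1.1 (cons_eq true _ _ h))
      · rw [basB_succ_false hv, basB_succ_true hw] at h
        exact absurd (congrFun h 0) (by rw [Fin.cons_zero, Fin.cons_zero]; simp)
      · rw [basB_succ_true hv, basB_succ_false hw] at h
        exact absurd (congrFun h 0) (by rw [Fin.cons_zero, Fin.cons_zero]; simp)
      · rw [basB_succ_true hv, basB_succ_true hw] at h
        exact recon v w (hv.trans hw.symm) (cons_eq false _ _ h)

noncomputable def permA (n : ℕ) : Equiv.Perm (Fin n → Bool) :=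
  Equiv.ofBijective (basA n) (bas_bijective n).1

noncomputable def permB (n : ℕ) : Equiv.Perm (Fin n → Bool) :=
  Equiv.ofBijective (basB n) (bas_bijective n).2

@[simp] lemma permA_apply (n : ℕ) (v : Fin n → Bool) : permA n v = basA n v := rfl
@[simp] lemma permB_apply (n : ℕ) (v : Fin n → Bool) : permB n v = basB n v := rfl

def splitE (n : ℕ) : (Fin (n + 1) → Bool) ≃ ((Fin n → Bool) ⊕ (Fin n → Bool)) where
  toFun v := if v 0 = true then inr (Fin.tail v) else inl (Fin.tail v)
  invFun := Sum.elim (fun w => Fin.cons false w) (fun w => Fin.cons true w)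
  left_inv := by
    intro v
    cases hv : v 0 <;> simp [hv]
    · conv_rhs => rw [← Fin.cons_self_tail v]
      rw [hv]
    · conv_rhs => rw [← Fin.cons_self_tail v]
      rw [hv]
  right_inv := by
    rintro (w | w) <;> simp

lemma splitE_true {n : ℕ} {v : Fin (n + 1) → Bool} (h : v 0 = true) :
    splitE n v = inr (Fin.tail v) := by simp [splitE, h]

lemma splitE_false {n : ℕ} {v : Fin (n + 1) → Bool} (h : v 0 = false) :
    splitE n v = inl (Fin.tail v) := by simp [splitE, h]

lemma conjA (n : ℕ) (v : Fin (n + 1) → Bool) :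
    sumPerm (permB n) 1 (splitE n v) = splitE n (permA (n + 1) v) := by
  cases hv : v 0
  · rw [splitE_false hv, sumPerm_inl]
    rw [permA_apply, basA_succ_false hv, splitE_false (by rw [Fin.cons_zero]), Fin.tail_cons]
    rfl
  · rw [splitE_true hv, sumPerm_inr]
    rw [permA_apply, basA_succ_true hv, splitE_true hv]
    rfl

lemma conjB (n : ℕ) (v : Fin (n + 1) → Bool) :
    dbl (permA n) (splitE n v) = splitE n (permB (n + 1) v) := by
  cases hv : v 0
  · rw [splitE_false hv, dbl_inl]
    rw [permB_apply, basB_succ_false hv, splitE_true (by rw [Fin.cons_zero]), Fin.tail_cons]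
    rfl
  · rw [splitE_true hv, dbl_inr]
    rw [permB_apply, basB_succ_true hv, splitE_false (by rw [Fin.cons_zero]), Fin.tail_cons]

lemma permA_zero : permA 0 = 1 := by
  ext v i
  exact i.elim0

lemma permB_zero : permB 0 = 1 := by
  ext v i
  exact i.elim0

lemma card_word (n : ℕ) : Fintype.card (Fin n → Bool) = 2 ^ n := by
  simp

lemma ocA_zero : oc (permA 0) = 1 := by
  rw [permA_zero, oc_one, card_word, pow_zero]

lemma ocB_zero : oc (permB 0) = 1 := by
  rw [permB_zero, oc_one, card_word, pow_zero]

lemma opA_zero : op (permA 0) = 1 := by rw [permA_zero, op_one]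
lemma opB_zero : op (permB 0) = 1 := by rw [permB_zero, op_one]

lemma ocA_succ (n : ℕ) : oc (permA (n + 1)) = oc (permB n) + 2 ^ n := by
  rw [← oc_congr (splitE n) (conjA n), oc_sum, oc_one, card_word]

lemma opA_succ (n : ℕ) : op (permA (n + 1)) = op (permB n) := by
  rw [← op_congr (splitE n) (conjA n), op_sum, op_one, mul_one]

lemma ocB_succ (n : ℕ) : oc (permB (n + 1)) = oc (permA n) := by
  rw [← oc_congr (splitE n) (conjB n), oc_dbl]

lemma opB_succ (n : ℕ) : op (permB (n + 1)) = 2 ^ (oc (permA n)) * op (permA n) := by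
  rw [← op_congr (splitE n) (conjB n), op_dbl]

lemma oc_add (n : ℕ) : oc (permA n) + oc (permB n) = 2 ^ n + 1 := by
  induction n with
  | zero => rw [ocA_zero, ocB_zero, pow_zero]
  | succ n ih =>
    rw [ocA_succ, ocB_succ]
    omega

lemma op_mul (n : ℕ) :
    op (permA n) * op (permB n) = 2 ^ (∑ i ∈ Finset.range n, oc (permA i)) := by
  induction n with
  | zero => simp [opA_zero, opB_zero]
  | succ n ih =>
    rw [opA_succ, opB_succ, Finset.sum_range_succ, pow_add, ← ih]
    ring

lemma ocA_bound : ∀ n : ℕ, 3 * oc (permA n) = 2 ^ (n + 1) + (if Even n then 1 else 2)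
    ∧ 3 * oc (permB n) = 2 ^ n + (if Even n then 2 else 1) := by
  intro n
  induction n with
  | zero => simp [ocA_zero, ocB_zero]
  | succ n ih =>
    have he : Even (n + 1) ↔ ¬ Even n := Nat.even_add_one
    constructor
    · rw [ocA_succ, Nat.mul_add, ih.2]
      by_cases h : Even n <;> simp [he, h] <;> rw [pow_succ, pow_succ] <;> ring
    · rw [ocB_succ, ih.1]
      by_cases h : Even n <;> simp [he, h]

end Basilica


section BasilicaGraph

open Sum Finset

instance instDecEqOQ {α : Type} [Fintype α] [DecidableEq α] (σ : Equiv.Perm α) :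
    DecidableEq (OQ σ) := fun a b =>
  Quotient.recOnSubsingleton₂ a b fun x y =>
    decidable_of_iff (σ.SameCycle x y) ⟨fun h => oq_sound h, fun h => oq_exact h⟩

noncomputable def fib (n : ℕ) : (basilica n).Edge → (OQ (permA n) ⊕ OQ (permB n)) :=
  fun e => match e.1 with
    | true => Sum.inl (⟦e.2⟧ : OQ (permA n))
    | false => Sum.inr (⟦e.2⟧ : OQ (permB n))

lemma fib_true (n : ℕ) (v : Fin n → Bool) :
    fib n (true, v) = Sum.inl (⟦v⟧ : OQ (permA n)) := rfl

lemma fib_false (n : ℕ) (v : Fin n → Bool) :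
    fib n (false, v) = Sum.inr (⟦v⟧ : OQ (permB n)) := rfl

lemma fib_surj (n : ℕ) : Function.Surjective (fib n) := by
  rintro (q | q)
  · induction q using Quotient.ind
    rename_i x
    exact ⟨(true, x), rfl⟩
  · induction q using Quotient.ind
    rename_i x
    exact ⟨(false, x), rfl⟩

lemma basilica_inc (n : ℕ) (s : Bool) (v : Fin n → Bool) :
    (basilica n).inc (s, v) = s(v, basGen n s v) := rfl

lemma reach_gen (m : ℕ) (s : Bool) (v : Fin m → Bool) :
    ((basilica m).toSimple Finset.univ).Reachable v (basGen m s v) := by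
  by_cases h : basGen m s v = v
  · rw [h]
  · exact ((toSimple_adj (basilica m) Finset.univ v (basGen m s v)).mpr
      ⟨Ne.symm h, (s, v), Finset.mem_univ _, Or.inl rfl⟩).reachable

lemma reach_univ : ∀ (n : ℕ) (v w : Fin n → Bool),
    ((basilica n).toSimple Finset.univ).Reachable v w := by
  intro n
  induction n with
  | zero =>
    intro v w
    have h : v = w := funext fun i => i.elim0
    rw [h]
  | succ n ih =>
    have step1 : ∀ w : Fin n → Bool,
        ((basilica (n+1)).toSimple Finset.univ).Reachable
          (Fin.cons true w) (Fin.cons false w) := by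
      intro w
      have h := reach_gen (n+1) false (Fin.cons true w)
      have he : basGen (n+1) false (Fin.cons true w) = Fin.cons false w := by
        show basB (n+1) (Fin.cons true w) = Fin.cons false w
        rw [basB_succ_true (by rw [Fin.cons_zero]), Fin.tail_cons]
      rwa [he] at h
    have step2 : ∀ w : Fin n → Bool,
        ((basilica (n+1)).toSimple Finset.univ).Reachable
          (Fin.cons false w) (Fin.cons false (basB n w)) := by
      intro w
      have h := reach_gen (n+1) true (Fin.cons false w)
      have he : basGen (n+1) true (Fin.cons false w) = Fin.cons false (basB n w) := by
        show basA (n+1) (Fin.cons false w) = Fin.cons false (basB n w)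
        rw [basA_succ_false (by rw [Fin.cons_zero]), Fin.tail_cons]
      rwa [he] at h
    have step3 : ∀ w : Fin n → Bool,
        ((basilica (n+1)).toSimple Finset.univ).Reachable
          (Fin.cons false w) (Fin.cons false (basA n w)) := by
      intro w
      have h := reach_gen (n+1) false (Fin.cons false w)
      have he : basGen (n+1) false (Fin.cons false w) = Fin.cons true (basA n w) := by
        show basB (n+1) (Fin.cons false w) = Fin.cons true (basA n w)
        rw [basB_succ_false (by rw [Fin.cons_zero]), Fin.tail_cons]
      rw [he] at h
      exact h.trans (step1 (basA n w))
    have stepgen : ∀ (s : Bool) (w : Fin n → Bool),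
        ((basilica (n+1)).toSimple Finset.univ).Reachable
          (Fin.cons false w) (Fin.cons false (basGen n s w)) := by
      intro s w
      cases s
      · exact step2 w
      · exact step3 w
    have step4 : ∀ w w' : Fin n → Bool,
        ((basilica n).toSimple Finset.univ).Reachable w w' →
        ((basilica (n+1)).toSimple Finset.univ).Reachable
          (Fin.cons false w) (Fin.cons false w') := by
      rintro w w' ⟨p⟩
      induction p with
      | nil => exact SimpleGraph.Reachable.refl _
      | @cons a b c hadj p ihp =>
        have hstep : ((basilica (n+1)).toSimple Finset.univ).Reachable
            (Fin.cons false a) (Fin.cons false b) := by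
          rw [toSimple_adj] at hadj
          obtain ⟨hne, ⟨s, u⟩, -, hh⟩ := hadj
          rw [basilica_inc] at hh
          simp only [Sym2.eq_iff] at hh
          rcases hh with (⟨h1, h2⟩ | ⟨h1, h2⟩) | (⟨h1, h2⟩ | ⟨h1, h2⟩)
          · rw [← h1, ← h2]; exact stepgen s u
          · rw [← h1, ← h2]; exact (stepgen s u).symm
          · rw [← h1, ← h2]; exact (stepgen s u).symm
          · rw [← h1, ← h2]; exact stepgen s u
        exact hstep.trans ihp
    intro v w
    have hnorm : ∀ v : Fin (n+1) → Bool,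
        ((basilica (n+1)).toSimple Finset.univ).Reachable v (Fin.cons false (Fin.tail v)) := by
      intro v
      cases hv : v 0
      · have : v = Fin.cons false (Fin.tail v) := by
          rw [← hv, Fin.cons_self_tail]
        rw [← this]
      · have : v = Fin.cons true (Fin.tail v) := by
          rw [← hv, Fin.cons_self_tail]
        rw [this]
        exact step1 (Fin.tail v)
    exact (hnorm v).trans ((step4 _ _ (ih (Fin.tail v) (Fin.tail w))).trans (hnorm w).symm)

lemma comps_univ (n : ℕ) : (basilica n).comps Finset.univ = 1 :=
  (comps_eq_one_iff (basilica n) Finset.univ).mpr ⟨⟨fun _ => false⟩, reach_univ n⟩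

lemma cycle_reach (n : ℕ) (s : Bool) (σ : Equiv.Perm (Fin n → Bool))
    (hσ : ∀ w, σ w = basGen n s w) (v : Fin n → Bool) (A : Finset (basilica n).Edge)
    (hA : ∀ w, σ.SameCycle v w → w ≠ v → ((s, w) : (basilica n).Edge) ∈ A) :
    ((basilica n).toSimple A).Reachable v (basGen n s v) := by
  have key : ∀ k : ℕ, 1 ≤ k → k ≤ orderOf σ →
      ((basilica n).toSimple A).Reachable (σ v) ((σ ^ k) v) := by
    intro k
    induction k with
    | zero => intro h; omega
    | succ k ihk =>
      intro h1 h2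
      rcases Nat.lt_or_ge 0 k with hk0 | hk0
      · have R := ihk hk0 (by omega)
        by_cases hv : (σ ^ k) v = v
        · have he : (σ ^ (k + 1)) v = σ v := by
            rw [pow_succ', Equiv.Perm.mul_apply, hv]
          rw [he]
        · by_cases hfix : basGen n s ((σ ^ k) v) = (σ ^ k) v
          · have he : (σ ^ (k + 1)) v = (σ ^ k) v := by
              rw [pow_succ', Equiv.Perm.mul_apply, hσ, hfix]
            rw [he]
            exact R
          · have hmem : ((s, (σ ^ k) v) : (basilica n).Edge) ∈ A :=
              hA _ (sameCycle_of_pow k rfl) hv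
            have he : (σ ^ (k + 1)) v = basGen n s ((σ ^ k) v) := by
              rw [pow_succ', Equiv.Perm.mul_apply, hσ]
            have hadj : ((basilica n).toSimple A).Adj ((σ ^ k) v) ((σ ^ (k + 1)) v) := by
              rw [toSimple_adj]
              refine ⟨?_, (s, (σ ^ k) v), hmem, Or.inl ?_⟩
              · rw [he]; exact fun hcc => hfix hcc.symm
              · rw [basilica_inc, he]
            exact R.trans hadj.reachable
      · have hk : k = 0 := by omega
        subst hk
        rw [pow_one]
  have h0 := key (orderOf σ) (orderOf_pos σ) le_rfl
  rw [pow_orderOf_eq_one] at h0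
  simp only [Equiv.Perm.one_apply] at h0
  rw [← hσ]
  exact h0.symm

lemma basilica_hcyc (n : ℕ) : ∀ (e : (basilica n).Edge) (A : Finset (basilica n).Edge),
    (∀ e', fib n e' = fib n e → e' ≠ e → e' ∈ A) →
    ∀ u w : Fin n → Bool, (basilica n).inc e = s(u, w) →
      ((basilica n).toSimple A).Reachable u w := by
  rintro ⟨s, v⟩ A hA u w hinc
  have hmain : ((basilica n).toSimple A).Reachable v (basGen n s v) := by
    cases s
    · refine cycle_reach n false (permB n) (fun w => rfl) v A ?_
      intro w hsc hne
      refine hA (false, w) ?_ ?_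
      · rw [fib_false, fib_false]
        exact congrArg Sum.inr (oq_sound hsc.symm)
      · exact fun hc => hne (congrArg Prod.snd hc)
    · refine cycle_reach n true (permA n) (fun w => rfl) v A ?_
      intro w hsc hne
      refine hA (true, w) ?_ ?_
      · rw [fib_true, fib_true]
        exact congrArg Sum.inl (oq_sound hsc.symm)
      · exact fun hc => hne (congrArg Prod.snd hc)
  rw [basilica_inc, Sym2.eq_iff] at hinc
  rcases hinc with ⟨rfl, rfl⟩ | ⟨rfl, rfl⟩
  · exact hmain
  · exact hmain.symm

lemma basilica_hcard (n : ℕ) :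
    Fintype.card (basilica n).Edge + 1
      = Fintype.card (Fin n → Bool) + Fintype.card (OQ (permA n) ⊕ OQ (permB n)) := by
  have h1 : Fintype.card (basilica n).Edge = 2 * 2 ^ n := by
    show Fintype.card (Bool × (Fin n → Bool)) = 2 * 2 ^ n
    rw [Fintype.card_prod, card_word, Fintype.card_bool]
  rw [h1, card_word, Fintype.card_sum]
  show 2 * 2 ^ n + 1 = 2 ^ n + (oc (permA n) + oc (permB n))
  rw [oc_add]
  ring

def fibSubtypeA (n : ℕ) (x : Fin n → Bool) :
    {e : (basilica n).Edge // fib n e = Sum.inl (⟦x⟧ : OQ (permA n))}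
      ≃ {y : Fin n → Bool // (permA n).SameCycle x y} where
  toFun := fun u => match u with
    | ⟨(true, w), h⟩ => ⟨w, (oq_exact (Sum.inl.inj h)).symm⟩
    | ⟨(false, w), h⟩ => absurd h Sum.inr_ne_inl
  invFun := fun y => ⟨(true, y.1), congrArg Sum.inl (oq_sound y.2.symm)⟩
  left_inv := by
    rintro ⟨⟨s, w⟩, h⟩
    cases s
    · exact absurd h Sum.inr_ne_inl
    · exact Subtype.ext rfl
  right_inv := fun y => Subtype.ext rfl

def fibSubtypeB (n : ℕ) (x : Fin n → Bool) :
    {e : (basilica n).Edge // fib n e = Sum.inr (⟦x⟧ : OQ (permB n))}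
      ≃ {y : Fin n → Bool // (permB n).SameCycle x y} where
  toFun := fun u => match u with
    | ⟨(false, w), h⟩ => ⟨w, (oq_exact (Sum.inr.inj h)).symm⟩
    | ⟨(true, w), h⟩ => absurd h Sum.inl_ne_inr
  invFun := fun y => ⟨(false, y.1), congrArg Sum.inr (oq_sound y.2.symm)⟩
  left_inv := by
    rintro ⟨⟨s, w⟩, h⟩
    cases s
    · exact Subtype.ext rfl
    · exact absurd h Sum.inl_ne_inr
  right_inv := fun y => Subtype.ext rfl

lemma basilica_prod (n : ℕ) :
    (∏ i : OQ (permA n) ⊕ OQ (permB n),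
      (Finset.univ.filter fun e => fib n e = i).card) = op (permA n) * op (permB n) := by
  rw [Fintype.prod_sum_type]
  congr 1
  · refine Finset.prod_congr rfl fun q _ => ?_
    obtain ⟨x, rfl⟩ := Quotient.exists_rep q
    rw [← Fintype.card_subtype, osize_mk]
    exact Fintype.card_congr (fibSubtypeA n x)
  · refine Finset.prod_congr rfl fun q _ => ?_
    obtain ⟨x, rfl⟩ := Quotient.exists_rep q
    rw [← Fintype.card_subtype, osize_mk]
    exact Fintype.card_congr (fibSubtypeB n x)

theorem treeCount_basilica (n : ℕ) :
    (basilica n).treeCount = 2 ^ (∑ i ∈ Finset.range n, oc (permA i)) := by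
  rw [treeCount_eq_prod (basilica n) (fib n) (fib_surj n) (comps_univ n)
    (basilica_hcard n) (basilica_hcyc n), basilica_prod, op_mul]

end BasilicaGraph

section Analysis

open Finset Filter

noncomputable def Ssum (n : ℕ) : ℕ := ∑ i ∈ Finset.range n, oc (permA i)

lemma S_bounds (n : ℕ) :
    2 ^ (n + 1) + n ≤ 3 * Ssum n + 2 ∧ 3 * Ssum n + 2 ≤ 2 ^ (n + 1) + 2 * n := by
  induction n with
  | zero => simp [Ssum]
  | succ n ih =>
    have hS : Ssum (n + 1) = Ssum n + oc (permA n) := Finset.sum_range_succ _ n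
    have hA := (ocA_bound n).1
    have hpow : (2 : ℕ) ^ (n + 2) = 2 * 2 ^ (n + 1) := by rw [pow_succ]; ring
    by_cases h : Even n
    · rw [if_pos h] at hA
      constructor <;> omega
    · rw [if_neg h] at hA
      constructor <;> omega

lemma basilica_tendsto_aux :
    Tendsto (fun n : ℕ => ((Ssum n : ℝ) / 2 ^ n)) atTop (nhds (2 / 3)) := by
  have key : ∀ n : ℕ, |(Ssum n : ℝ) / 2 ^ n - 2 / 3| ≤ (2 * n + 2) / (3 * 2 ^ n) := by
    intro n
    have hb := S_bounds n
    have hp : (0 : ℝ) < 2 ^ n := by positivity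
    have h1 : ((2 : ℝ) ^ (n + 1) + n) ≤ 3 * (Ssum n : ℝ) + 2 := by exact_mod_cast hb.1
    have h2 : (3 * (Ssum n : ℝ) + 2) ≤ 2 ^ (n + 1) + 2 * n := by exact_mod_cast hb.2
    have hkey : (Ssum n : ℝ) / 2 ^ n - 2 / 3 = (3 * (Ssum n : ℝ) - 2 ^ (n + 1)) / (3 * 2 ^ n) := by
      rw [pow_succ]
      field_simp
    rw [hkey, abs_div, abs_of_pos (by positivity : (0 : ℝ) < 3 * 2 ^ n),
      div_le_div_iff_of_pos_right (by positivity : (0 : ℝ) < 3 * 2 ^ n)]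
    rw [abs_le]
    constructor <;> linarith
  have h1 : Tendsto (fun n : ℕ => ((n : ℝ)) ^ 1 / (2 : ℝ) ^ n) atTop (nhds 0) :=
    tendsto_pow_const_div_const_pow_of_one_lt 1 one_lt_two
  have h0 : Tendsto (fun n : ℕ => ((n : ℝ)) ^ 0 / (2 : ℝ) ^ n) atTop (nhds 0) :=
    tendsto_pow_const_div_const_pow_of_one_lt 0 one_lt_two
  have herr : Tendsto (fun n : ℕ => (2 * (n : ℝ) + 2) / (3 * 2 ^ n)) atTop (nhds 0) := by
    have hcomb := ((h1.const_mul ((2 : ℝ) / 3)).add (h0.const_mul ((2 : ℝ) / 3)))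
    norm_num at hcomb
    refine hcomb.congr fun n => ?_
    have hp : (0 : ℝ) < 2 ^ n := by positivity
    field_simp
  have hz : Tendsto (fun n : ℕ => (Ssum n : ℝ) / 2 ^ n - 2 / 3) atTop (nhds 0) := by
    refine squeeze_zero_norm (fun n => ?_) herr
    rw [Real.norm_eq_abs]
    exact key n
  exact tendsto_sub_nhds_zero_iff.mp hz

end Analysis

end BasilicaAux

/-- The asymptotic growth constant of the spanning trees of the
sequence `{B_n}` of Schreier graphs of the Basilica group equals `(2/3)·log 2`:
`lim_{n→∞} (log τ(B_n)) / |V(B_n)| = (2/3)·log 2`, where `|V(B_n)| = 2^n`. -/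
theorem asymptotic_growth_basilica :
    Filter.Tendsto
      (fun n : ℕ => Real.log ((basilica n).treeCount : ℝ) / ((2 : ℝ) ^ n))
      Filter.atTop (nhds ((2 / 3) * Real.log 2)) := by
  have hfun : ∀ n : ℕ, Real.log (((basilica n).treeCount : ℝ)) / ((2 : ℝ) ^ n)
      = ((BasilicaAux.Ssum n : ℝ) / 2 ^ n) * Real.log 2 := by
    intro n
    rw [BasilicaAux.treeCount_basilica n]
    push_cast
    rw [Real.log_pow]
    show ((∑ i ∈ Finset.range n, BasilicaAux.oc (BasilicaAux.permA i) : ℕ) : ℝ)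
        * Real.log 2 / 2 ^ n = _
    rw [show ((∑ i ∈ Finset.range n, BasilicaAux.oc (BasilicaAux.permA i) : ℕ) : ℝ)
        = (BasilicaAux.Ssum n : ℝ) from rfl]
    ring
  have h := BasilicaAux.basilica_tendsto_aux.mul_const (Real.log 2)
  refine Filter.Tendsto.congr (fun n => (hfun n).symm) h
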